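/- Let V be a finite-dimensional vector space over a field F, and let L, M : V → V be linear maps that are similar, i.e. there exists a linear automorphism S of V with S ∘ L = M ∘ S. Then for all α, β ∈ V: there exists a linear automorphism T of V with T ∘ L = M ∘ T and T(α) - β ∈ range(M - id_V) (so T takes the coset α + range(L - id_V) to the coset β + range(M - id_V)) if and only if τ(α, L) = τ(β, M). -/

import Mathlib

set_option linter.unusedSectionVars false
set_option maxHeartbeats 1000000

open Polynomial DirectSum Submodule

section TSet
variable {A : Type*} [CommRing A]

/-- The set of `k` such that `x ∈ p•W + W[p^k]`. -/
def TSet (p : A) {W : Type*} [AddCommGroup W] [Module A W] (x : W) : Set ℕ :=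
  {k | ∃ u w : W, x = p • u + w ∧ p ^ k • w = 0}

variable {p : A} {W : Type*} [AddCommGroup W] [Module A W]

lemma TSet.mono {x : W} {k k' : ℕ} (h : k ∈ TSet p x) (hk : k ≤ k') : k' ∈ TSet p x := by
  obtain ⟨u, w, h1, h2⟩ := h
  exact ⟨u, w, h1, by rw [← Nat.sub_add_cancel hk, pow_add, mul_smul, h2, smul_zero]⟩

lemma TSet.map_mem {W' : Type*} [AddCommGroup W'] [Module A W'] (g : W →ₗ[A] W') {x : W} {k : ℕ}
    (h : k ∈ TSet p x) : k ∈ TSet p (g x) := by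
  obtain ⟨u, w, h1, h2⟩ := h
  exact ⟨g u, g w, by rw [h1, map_add, map_smul], by rw [← map_smul, h2, map_zero]⟩

lemma TSet.map_equiv {W' : Type*} [AddCommGroup W'] [Module A W'] (g : W ≃ₗ[A] W') (x : W) :
    TSet p (g x) = TSet p x := by
  ext k
  refine ⟨fun hk => ?_, fun hk => TSet.map_mem g.toLinearMap hk⟩
  have := TSet.map_mem (p := p) g.symm.toLinearMap hk
  simpa using this

lemma TSet.zero_mem_iff {x : W} : 0 ∈ TSet p x ↔ ∃ u, x = p • u := by
  constructor
  · rintro ⟨u, w, h1, h2⟩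
    rw [pow_zero, one_smul] at h2
    exact ⟨u, by rw [h1, h2, add_zero]⟩
  · rintro ⟨u, hu⟩
    exact ⟨u, 0, by rw [hu, add_zero], smul_zero _⟩

lemma mem_tset_of_psmul {x : W} {k : ℕ} (h : ∃ u, x = p • u) : k ∈ TSet p x := by
  obtain ⟨u, hu⟩ := h
  exact ⟨u, 0, by rw [hu, add_zero], smul_zero _⟩

lemma smul_quot_eq_zero {c d : A} (h : c ∣ d) (x : A ⧸ (A ∙ c)) : d • x = 0 := by
  obtain ⟨r, rfl⟩ := Submodule.Quotient.mk_surjective _ x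
  rw [← Submodule.Quotient.mk_smul, Submodule.Quotient.mk_eq_zero]
  obtain ⟨s, rfl⟩ := h
  exact Submodule.mem_span_singleton.mpr ⟨s * r, by simp [smul_eq_mul]; ring⟩

lemma smul_eq_zero_of_assoc {d d' : A} (h : Associated d d') {y : W} (hy : d' • y = 0) :
    d • y = 0 := by
  obtain ⟨u, hu⟩ := h.symm
  rw [← hu, mul_comm, mul_smul, hy, smul_zero]

section PID
variable [IsDomain A] [IsPrincipalIdealRing A]

lemma exists_psmul_of_not_assoc {q : A} (hp : Prime p) (hq : Irreducible q)
    (h : ¬Associated q p) {e : ℕ} (x : A ⧸ (A ∙ q ^ e)) : ∃ u, x = p • u := by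
  have hd : ¬ p ∣ q ^ e := fun hdvd =>
    h ((hp.irreducible.associated_of_dvd hq (hp.dvd_of_dvd_pow hdvd)).symm)
  obtain ⟨s, t, hst⟩ := hp.coprime_iff_not_dvd.mpr hd
  have h0 : (q ^ e) • x = 0 := smul_quot_eq_zero dvd_rfl x
  refine ⟨s • x, ?_⟩
  calc x = (s * p) • x + (t * q ^ e) • x := by rw [← add_smul, hst, one_smul]
  _ = p • s • x := by rw [mul_smul t, h0, smul_zero, add_zero, mul_comm, mul_smul]

lemma mem_tset_of_le {q : A} (hassoc : Associated q p) {e k : ℕ} (hek : e ≤ k)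
    (x : A ⧸ (A ∙ q ^ e)) : k ∈ TSet p x :=
  ⟨0, x, by rw [smul_zero, zero_add],
    smul_quot_eq_zero ((hassoc.pow_pow (n := e)).dvd.trans (pow_dvd_pow p hek)) x⟩

lemma exists_psmul_of_mem_tset_lt {q : A} (hp : Prime p) (hassoc : Associated q p) {e k : ℕ}
    (hk : k < e) {x : A ⧸ (A ∙ q ^ e)} (hx : k ∈ TSet p x) : ∃ u, x = p • u := by
  obtain ⟨u, w, h1, h2⟩ := hx
  obtain ⟨r, rfl⟩ := Submodule.Quotient.mk_surjective _ w
  have hdvd : q ^ e ∣ p ^ k * r := by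
    rw [← Submodule.Quotient.mk_smul, Submodule.Quotient.mk_eq_zero] at h2
    obtain ⟨s, hs⟩ := Submodule.mem_span_singleton.mp h2
    rw [smul_eq_mul, smul_eq_mul] at hs
    exact ⟨s, by rw [← hs]; ring⟩
  have hpe : p ^ e ∣ p ^ k * r := ((hassoc.pow_pow (n := e)).symm.dvd).trans hdvd
  have hpk : p ^ (e - k) ∣ r := by
    have hpow : p ^ k * p ^ (e - k) = p ^ e := by rw [← pow_add, Nat.add_sub_cancel' hk.le]
    have : p ^ k * p ^ (e - k) ∣ p ^ k * r := by rw [hpow]; exact hpe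
    exact (mul_dvd_mul_iff_left (pow_ne_zero k hp.ne_zero)).mp this
  have hpr : p ∣ r := (dvd_pow_self p (Nat.sub_ne_zero_of_lt hk)).trans hpk
  obtain ⟨r₂, rfl⟩ := hpr
  refine ⟨u + Submodule.Quotient.mk r₂, ?_⟩
  rw [h1, smul_add]
  congr 1

end PID
end TSet

section DS
variable {A : Type*} [CommRing A] {p : A}
variable {ι : Type*} [DecidableEq ι] [Fintype ι]

section Gen
variable {M : ι → Type*} [∀ i, AddCommGroup (M i)] [∀ i, Module A (M i)]

lemma tset_directSum {x : ⨁ i, M i} {k : ℕ} :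
    k ∈ TSet p x ↔ ∀ i, k ∈ TSet p (DirectSum.component A ι M i x) := by
  constructor
  · intro h i
    exact TSet.map_mem (DirectSum.component A ι M i) h
  · intro h
    choose u w h1 h2 using h
    refine ⟨∑ i, DirectSum.lof A ι M i (u i), ∑ i, DirectSum.lof A ι M i (w i), ?_, ?_⟩
    · rw [Finset.smul_sum, ← Finset.sum_add_distrib]
      have : ∀ i, p • DirectSum.lof A ι M i (u i) + DirectSum.lof A ι M i (w i)
          = DirectSum.lof A ι M i (DirectSum.component A ι M i x) := by
        intro i
        rw [← map_smul, ← map_add, ← h1 i]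
      rw [Finset.sum_congr rfl (fun i _ => this i)]
      -- ∑ i, lof i (component i x) = x
      conv_lhs => rw [← DirectSum.sum_univ_of x]
      exact Finset.sum_congr rfl (fun i _ => by rw [DirectSum.lof_eq_of]; rfl)
    · rw [Finset.smul_sum]
      refine Finset.sum_eq_zero (fun i _ => ?_)
      rw [← map_smul, h2 i, map_zero]

end Gen

section Phi
variable {F : Type*} [Field F] [Algebra F A]

lemma exists_phi (c : ι → A) [FiniteDimensional F (⨁ i, A ⧸ (A ∙ c i))]
    (m : ι) (x : ⨁ i, A ⧸ (A ∙ c i)) (h1 : c m • x = 0)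
    (h2 : ∃ s : A, s • (DirectSum.component A ι (fun i => A ⧸ (A ∙ c i)) m x)
      = Submodule.Quotient.mk 1) :
    ∃ Φ : (⨁ i, A ⧸ (A ∙ c i)) ≃ₗ[A] (⨁ i, A ⧸ (A ∙ c i)),
      Φ (DirectSum.lof A ι (fun i => A ⧸ (A ∙ c i)) m (Submodule.Quotient.mk 1)) = x := by
  set M : ι → Type _ := fun i => A ⧸ (A ∙ c i) with hM
  set ψ : M m →ₗ[A] (⨁ i, M i) :=
    Submodule.liftQSpanSingleton (c m) (LinearMap.toSpanSingleton A _ x)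
      (by rw [LinearMap.toSpanSingleton_apply]; exact h1) with hψ
  have hψ_apply : ∀ r : A, ψ (Submodule.Quotient.mk r) = r • x := fun r => by
    rw [hψ, Submodule.liftQSpanSingleton_apply, LinearMap.toSpanSingleton_apply]
  set φ : (⨁ i, M i) →ₗ[A] (⨁ i, M i) :=
    DirectSum.toModule A ι _ (Function.update (fun i => DirectSum.lof A ι M i) m ψ) with hφ
  set χ : (⨁ i, M i) →ₗ[A] (⨁ i, M i) :=
    LinearMap.id - (DirectSum.lof A ι M m).comp (DirectSum.component A ι M m)
      + ψ.comp (DirectSum.component A ι M m) with hχ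
  have key : φ = χ := by
    refine DirectSum.linearMap_ext _ (fun i => ?_)
    refine LinearMap.ext (fun z => ?_)
    simp only [LinearMap.comp_apply, hχ, LinearMap.add_apply, LinearMap.sub_apply,
      LinearMap.id_apply, hφ]
    rw [DirectSum.toModule_lof]
    by_cases h : i = m
    · subst h
      rw [Function.update_self, DirectSum.component.lof_self]
      abel
    · rw [Function.update_of_ne h]
      have hcz : DirectSum.component A ι M m (DirectSum.lof A ι M i z) = 0 := by
        rw [DirectSum.component.of, dif_neg h]
      rw [hcz, map_zero, map_zero, sub_zero, add_zero]
  have hker : ∀ y, φ y = 0 → y = 0 := by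
    intro y hy
    rw [key] at hy
    have hχy : y - DirectSum.lof A ι M m (DirectSum.component A ι M m y)
        + ψ (DirectSum.component A ι M m y) = 0 := by
      simpa [hχ] using hy
    obtain ⟨r, hr⟩ := Submodule.Quotient.mk_surjective _ (DirectSum.component A ι M m y)
    obtain ⟨s, hs⟩ := h2
    have h0 : r • DirectSum.component A ι M m x = 0 := by
      have hc := congrArg (DirectSum.component A ι M m) hχy
      simp only [map_add, map_sub, DirectSum.component.lof_self, sub_self, zero_add,
        map_zero] at hc
      rw [← hr, hψ_apply, map_smul] at hc
      exact hc
    have hym : DirectSum.component A ι M m y = 0 := by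
      rw [← hr]
      calc Submodule.Quotient.mk r = r • (Submodule.Quotient.mk 1 : M m) := by
            rw [← Submodule.Quotient.mk_smul, smul_eq_mul, mul_one]
      _ = r • s • DirectSum.component A ι M m x := by rw [hs]
      _ = s • (r • DirectSum.component A ι M m x) := smul_comm r s _
      _ = 0 := by rw [h0, smul_zero]
    rw [hym, map_zero, map_zero, sub_zero, add_zero] at hχy
    exact hχy
  have hinj : Function.Injective φ := (injective_iff_map_eq_zero φ).mpr hker
  have hsurj : Function.Surjective φ := by
    have h' : Function.Injective (LinearMap.restrictScalars F φ) := fun a b h => hinj h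
    exact LinearMap.injective_iff_surjective.mp h'
  refine ⟨LinearEquiv.ofBijective φ ⟨hinj, hsurj⟩, ?_⟩
  show φ _ = x
  rw [hφ, DirectSum.toModule_lof, Function.update_self, hψ_apply, one_smul]

end Phi
end DS
section MainD
variable {F : Type*} [Field F]
variable {ι : Type*} [Fintype ι] [DecidableEq ι]
variable (q : ι → F[X]) (e : ι → ℕ)

lemma unit_of_not_psmul {p w : F[X]} (hw : Irreducible w) (hassoc : Associated w p) {d : ℕ}
    {x : F[X] ⧸ (F[X] ∙ w ^ d)} (h : ¬∃ u, x = p • u) :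
    ∃ s : F[X], s • x = Submodule.Quotient.mk 1 := by
  obtain ⟨r, rfl⟩ := Submodule.Quotient.mk_surjective _ x
  have hqr : ¬ w ∣ r := by
    rintro ⟨r₁, rfl⟩
    obtain ⟨v, hv⟩ := hassoc.symm
    refine h ⟨Submodule.Quotient.mk (↑v * r₁), ?_⟩
    rw [← Submodule.Quotient.mk_smul, smul_eq_mul]
    congr 1
    rw [← mul_assoc, hv]
  have hcop : IsCoprime (w ^ d) r := (hw.coprime_iff_not_dvd.mpr hqr).pow_left
  obtain ⟨s, t, hst⟩ := hcop
  refine ⟨t, ?_⟩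
  rw [← Submodule.Quotient.mk_smul, smul_eq_mul]
  rw [Submodule.Quotient.eq]
  refine Submodule.mem_span_singleton.mpr ⟨-s, ?_⟩
  rw [smul_eq_mul]
  linear_combination -hst

lemma exists_slot {p : F[X]} (hp : Prime p) (hq : ∀ i, Irreducible (q i))
    {x : ⨁ i : ι, F[X] ⧸ (F[X] ∙ (q i ^ e i))} {t : ℕ} (ht : 0 < t)
    (hmem : t ∈ TSet p x) (hnot : (t-1) ∉ TSet p x) :
    ∃ j, Associated (q j) p ∧ e j = t ∧
      ¬∃ u, DirectSum.component F[X] ι (fun i => F[X] ⧸ (F[X] ∙ (q i ^ e i))) j x = p • u := by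
  rw [tset_directSum] at hmem
  have hj : ∃ j, (t-1) ∉ TSet p
      (DirectSum.component F[X] ι (fun i => F[X] ⧸ (F[X] ∙ (q i ^ e i))) j x) := by
    by_contra hc
    push_neg at hc
    exact hnot (tset_directSum.mpr hc)
  obtain ⟨j, hj⟩ := hj
  have hassoc : Associated (q j) p := by
    by_contra hna
    exact hj (mem_tset_of_psmul (exists_psmul_of_not_assoc hp (hq j) hna _))
  have hnu : ¬∃ u, DirectSum.component F[X] ι (fun i => F[X] ⧸ (F[X] ∙ (q i ^ e i))) j x = p • u :=
    fun hu => hj (mem_tset_of_psmul hu)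
  have het : ¬ (e j ≤ t - 1) := fun hle => hj (mem_tset_of_le hassoc hle _)
  have hle : e j ≤ t := by
    by_contra hgt
    exact hnu (exists_psmul_of_mem_tset_lt hp hassoc (by omega) (hmem j))
  exact ⟨j, hassoc, by omega, hnu⟩

lemma exists_trunc {p : F[X]} (hp : Prime p) (hq : ∀ i, Irreducible (q i))
    (x : ⨁ i : ι, F[X] ⧸ (F[X] ∙ (q i ^ e i))) (t : ℕ) (hmem : t ∈ TSet p x) :
    ∃ x', (∃ u, x - x' = p • u) ∧ p ^ t • x' = 0 ∧
      ∀ i, Associated (q i) p → e i ≤ t →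
        DirectSum.component F[X] ι (fun i => F[X] ⧸ (F[X] ∙ (q i ^ e i))) i x' =
        DirectSum.component F[X] ι (fun i => F[X] ⧸ (F[X] ∙ (q i ^ e i))) i x := by
  classical
  set Mf : ι → Type _ := fun i => F[X] ⧸ (F[X] ∙ (q i ^ e i)) with hMf
  set P : ι → Prop := fun i => Associated (q i) p ∧ e i ≤ t with hP
  set x' : ⨁ i, Mf i := ∑ i ∈ Finset.univ.filter P,
    DirectSum.lof F[X] ι Mf i (DirectSum.component F[X] ι Mf i x) with hx'
  have hcomp : ∀ i, DirectSum.component F[X] ι Mf i x' =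
      if P i then DirectSum.component F[X] ι Mf i x else 0 := by
    intro i
    rw [hx', map_sum]
    by_cases hPi : P i
    · rw [if_pos hPi]
      rw [Finset.sum_eq_single_of_mem i (Finset.mem_filter.mpr ⟨Finset.mem_univ i, hPi⟩)]
      · exact DirectSum.component.lof_self _ _ _
      · intro j _ hji
        rw [DirectSum.component.of, dif_neg hji]
    · rw [if_neg hPi]
      refine Finset.sum_eq_zero (fun j hjf => ?_)
      have hji : j ≠ i := fun hh => hPi (hh ▸ (Finset.mem_filter.mp hjf).2)
      rw [DirectSum.component.of, dif_neg hji]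
  refine ⟨x', ?_, ?_, fun i hi1 hi2 => by rw [hcomp, if_pos (show P i from ⟨hi1, hi2⟩)]⟩
  · refine (TSet.zero_mem_iff (p := p) (x := x - x')).mp ?_
    rw [tset_directSum]
    intro i
    refine mem_tset_of_psmul ?_
    rw [map_sub, hcomp]
    by_cases hPi : P i
    · rw [if_pos hPi, sub_self]; exact ⟨0, by rw [smul_zero]⟩
    · rw [if_neg hPi, sub_zero]
      by_cases ha : Associated (q i) p
      · have hlt : t < e i := by
          by_contra hh
          exact hPi ⟨ha, by omega⟩
        exact exists_psmul_of_mem_tset_lt hp ha hlt ((tset_directSum.mp hmem) i)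
      · exact exists_psmul_of_not_assoc hp (hq i) ha _
  · rw [hx', Finset.smul_sum]
    refine Finset.sum_eq_zero (fun i hif => ?_)
    obtain ⟨hia, hie⟩ := (Finset.mem_filter.mp hif).2
    rw [← map_smul]
    have hz : (p ^ t) • (DirectSum.component F[X] ι Mf i x) = 0 :=
      smul_quot_eq_zero ((hia.pow_pow (n := e i)).dvd.trans (pow_dvd_pow p hie)) _
    rw [hz, map_zero]

lemma main_D {p : F[X]} (hp : Prime p) (hq : ∀ i, Irreducible (q i))
    [FiniteDimensional F (⨁ i : ι, F[X] ⧸ (F[X] ∙ (q i ^ e i)))]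
    (a b : ⨁ i : ι, F[X] ⧸ (F[X] ∙ (q i ^ e i)))
    (h : sInf (TSet p a) = sInf (TSet p b)) :
    ∃ T : (⨁ i : ι, F[X] ⧸ (F[X] ∙ (q i ^ e i))) ≃ₗ[F[X]]
        (⨁ i : ι, F[X] ⧸ (F[X] ∙ (q i ^ e i))),
      ∃ u, T a - b = p • u := by
  classical
  set Mf : ι → Type _ := fun i => F[X] ⧸ (F[X] ∙ (q i ^ e i)) with hMf
  have hK : ∀ x : ⨁ i, Mf i, (Finset.univ.sup e) ∈ TSet p x := by
    intro x
    rw [tset_directSum]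
    intro i
    by_cases ha : Associated (q i) p
    · exact mem_tset_of_le ha (Finset.le_sup (Finset.mem_univ i)) _
    · exact mem_tset_of_psmul (exists_psmul_of_not_assoc hp (hq i) ha _)
  have hne_a : (TSet p a).Nonempty := ⟨_, hK a⟩
  have hne_b : (TSet p b).Nonempty := ⟨_, hK b⟩
  set t := sInf (TSet p a) with hts
  have ha_t : t ∈ TSet p a := Nat.sInf_mem hne_a
  have hb_t : t ∈ TSet p b := by rw [h]; exact Nat.sInf_mem hne_b
  rcases Nat.eq_zero_or_pos t with ht0 | htpos
  · rw [ht0] at ha_t hb_t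
    obtain ⟨ua, hua⟩ := TSet.zero_mem_iff.mp ha_t
    obtain ⟨ub, hub⟩ := TSet.zero_mem_iff.mp hb_t
    refine ⟨LinearEquiv.refl _ _, ua - ub, ?_⟩
    rw [LinearEquiv.refl_apply, hua, hub, smul_sub]
  · have hnot_a : (t-1) ∉ TSet p a := Nat.notMem_of_lt_sInf (by omega)
    have hnot_b : (t-1) ∉ TSet p b :=
      Nat.notMem_of_lt_sInf (show t - 1 < sInf (TSet p b) by rw [← h]; omega)
    obtain ⟨j, hja, hje, hju⟩ := exists_slot q e hp hq htpos ha_t hnot_a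
    obtain ⟨l, hla, hle, hlu⟩ := exists_slot q e hp hq htpos hb_t hnot_b
    obtain ⟨a', ⟨ua, hua⟩, ha'0, ha'c⟩ := exists_trunc q e hp hq a t ha_t
    obtain ⟨b', ⟨ub, hub⟩, hb'0, hb'c⟩ := exists_trunc q e hp hq b t hb_t
    have hjt : Associated (q j ^ e j) (p ^ t) := by rw [hje]; exact hja.pow_pow
    have hlt : Associated (q l ^ e l) (p ^ t) := by rw [hle]; exact hla.pow_pow
    have h1a : (q j ^ e j) • a' = 0 := smul_eq_zero_of_assoc (y := a') hjt ha'0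
    have h1b : (q l ^ e l) • b' = 0 := smul_eq_zero_of_assoc (y := b') hlt hb'0
    have h2a : ∃ s : F[X], s • DirectSum.component F[X] ι Mf j a'
        = (Submodule.Quotient.mk (p := F[X] ∙ (q j ^ e j)) 1) := by
      rw [ha'c j hja (le_of_eq hje)]
      exact unit_of_not_psmul (hq j) hja hju
    have h2b : ∃ s : F[X], s • DirectSum.component F[X] ι Mf l b'
        = (Submodule.Quotient.mk (p := F[X] ∙ (q l ^ e l)) 1) := by
      rw [hb'c l hla (le_of_eq hle)]
      exact unit_of_not_psmul (hq l) hla hlu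
    obtain ⟨Φa, hΦa⟩ := exists_phi (F := F) (fun i => q i ^ e i) j a' h1a h2a
    obtain ⟨Φb, hΦb⟩ := exists_phi (F := F) (fun i => q i ^ e i) l b' h1b h2b
    have hfin : ∀ T : (⨁ i, Mf i) ≃ₗ[F[X]] (⨁ i, Mf i), T a' = b' → ∃ u, T a - b = p • u := by
      intro T hT
      refine ⟨T ua - ub, ?_⟩
      have ha2 : a = a' + p • ua := by rw [← hua]; abel
      have hb2 : b = b' + p • ub := by rw [← hub]; abel
      rw [ha2, hb2, map_add, map_smul, hT, smul_sub]
      abel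
    by_cases hjl : j = l
    · subst hjl
      refine ⟨Φa.symm.trans Φb, hfin _ ?_⟩
      have e1 : Φa.symm a'
          = DirectSum.lof F[X] ι Mf j (Submodule.Quotient.mk (p := F[X] ∙ (q j ^ e j)) 1) := by
        rw [LinearEquiv.symm_apply_eq]; exact hΦa.symm
      rw [LinearEquiv.trans_apply, e1]
      exact hΦb
    · set δj : ⨁ i, Mf i := DirectSum.lof F[X] ι Mf j (Submodule.Quotient.mk (p := F[X] ∙ (q j ^ e j)) 1) with hδj
      set δl : ⨁ i, Mf i := DirectSum.lof F[X] ι Mf l (Submodule.Quotient.mk (p := F[X] ∙ (q l ^ e l)) 1) with hδl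
      set cδ := δj + δl with hcδ
      have hkillj : (q j ^ e j) • δj = 0 := by
        rw [hδj, ← map_smul, smul_quot_eq_zero dvd_rfl, map_zero]
      have hkilll : (q l ^ e l) • δl = 0 := by
        rw [hδl, ← map_smul, smul_quot_eq_zero dvd_rfl, map_zero]
      have hjl_assoc : Associated (q j ^ e j) (q l ^ e l) := hjt.trans hlt.symm
      have h1cj : (q j ^ e j) • cδ = 0 := by
        rw [hcδ, smul_add, hkillj, zero_add, hδl, ← map_smul,
          smul_quot_eq_zero hjl_assoc.symm.dvd, map_zero]
      have h1cl : (q l ^ e l) • cδ = 0 := by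
        rw [hcδ, smul_add, hkilll, hδj, ← map_smul,
          smul_quot_eq_zero hjl_assoc.dvd, map_zero, zero_add]
      have hcompj : DirectSum.component F[X] ι Mf j cδ
          = (Submodule.Quotient.mk (p := F[X] ∙ (q j ^ e j)) 1) := by
        rw [hcδ, map_add, hδj, DirectSum.component.lof_self, hδl, DirectSum.component.of,
          dif_neg (Ne.symm hjl), add_zero]
      have hcompl : DirectSum.component F[X] ι Mf l cδ
          = (Submodule.Quotient.mk (p := F[X] ∙ (q l ^ e l)) 1) := by
        rw [hcδ, map_add, hδl, DirectSum.component.lof_self, hδj, DirectSum.component.of,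
          dif_neg hjl, zero_add]
      obtain ⟨Φc1, hΦc1⟩ := exists_phi (F := F) (fun i => q i ^ e i) j cδ h1cj
        ⟨1, by rw [hcompj, one_smul]⟩
      obtain ⟨Φc2, hΦc2⟩ := exists_phi (F := F) (fun i => q i ^ e i) l cδ h1cl
        ⟨1, by rw [hcompl, one_smul]⟩
      refine ⟨Φa.symm.trans (Φc1.trans (Φc2.symm.trans Φb)), hfin _ ?_⟩
      have e1 : Φa.symm a' = δj := by rw [LinearEquiv.symm_apply_eq]; exact hΦa.symm
      have e2 : Φc2.symm cδ = δl := by rw [LinearEquiv.symm_apply_eq]; exact hΦc2.symm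
      rw [LinearEquiv.trans_apply, e1, LinearEquiv.trans_apply, hΦc1, LinearEquiv.trans_apply, e2]
      exact hΦb

end MainD

variable {F V : Type*} [Field F] [AddCommGroup V] [Module F V]

/-- `τ(α, L)`: the smallest `k ∈ ℕ` such that
`α ∈ range (L - id) + ker ((L - id)^k)`. -/
noncomputable def tau (L : V →ₗ[F] V) (α : V) : ℕ :=
  sInf {k : ℕ | α ∈ LinearMap.range (L - LinearMap.id : V →ₗ[F] V) ⊔
    LinearMap.ker ((L - LinearMap.id : V →ₗ[F] V) ^ k)}

section Intertwine
variable {V₂ : Type*} [AddCommGroup V₂] [Module F V₂]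

lemma mem_set_map {L : V →ₗ[F] V} {M : V₂ →ₗ[F] V₂} (T : V ≃ₗ[F] V₂)
    (hT : T.toLinearMap ∘ₗ L = M ∘ₗ T.toLinearMap) (k : ℕ) (γ : V)
    (hγ : γ ∈ LinearMap.range (L - LinearMap.id : V →ₗ[F] V) ⊔
      LinearMap.ker ((L - LinearMap.id : V →ₗ[F] V) ^ k)) :
    T γ ∈ LinearMap.range (M - LinearMap.id : V₂ →ₗ[F] V₂) ⊔
      LinearMap.ker ((M - LinearMap.id : V₂ →ₗ[F] V₂) ^ k) := by
  have hTL : ∀ v, T (L v) = M (T v) := fun v => congrArg (fun f => f v) hT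
  have h1 : ∀ v, T ((L - LinearMap.id : V →ₗ[F] V) v)
      = (M - LinearMap.id : V₂ →ₗ[F] V₂) (T v) := by
    intro v
    simp only [LinearMap.sub_apply, LinearMap.id_apply, map_sub, hTL v]
  have hk : ∀ n : ℕ, ∀ v, T (((L - LinearMap.id : V →ₗ[F] V) ^ n) v)
      = ((M - LinearMap.id : V₂ →ₗ[F] V₂) ^ n) (T v) := by
    intro n
    induction n with
    | zero => intro v; simp
    | succ n ih =>
      intro v
      rw [pow_succ', pow_succ', Module.End.mul_apply, Module.End.mul_apply,
        h1 (((L - LinearMap.id : V →ₗ[F] V) ^ n) v), ih v]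
  obtain ⟨y, hy, z, hz, rfl⟩ := Submodule.mem_sup.mp hγ
  obtain ⟨u, rfl⟩ := hy
  refine Submodule.mem_sup.mpr
    ⟨(M - LinearMap.id : V₂ →ₗ[F] V₂) (T u), ⟨T u, rfl⟩, T z, ?_, ?_⟩
  · rw [LinearMap.mem_ker, ← hk k, LinearMap.mem_ker.mp hz, map_zero]
  · rw [map_add, h1]

lemma intertwine_symm {L : V →ₗ[F] V} {M : V₂ →ₗ[F] V₂} (T : V ≃ₗ[F] V₂)
    (hT : T.toLinearMap ∘ₗ L = M ∘ₗ T.toLinearMap) :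
    T.symm.toLinearMap ∘ₗ M = L ∘ₗ T.symm.toLinearMap := by
  have hTL : ∀ v, T (L v) = M (T v) := fun v => congrArg (fun f => f v) hT
  refine LinearMap.ext (fun v => ?_)
  simp only [LinearMap.comp_apply, LinearEquiv.coe_coe]
  apply T.injective
  rw [hTL, T.apply_symm_apply, T.apply_symm_apply]

lemma tau_eq_of_intertwine {L : V →ₗ[F] V} {M : V₂ →ₗ[F] V₂} (T : V ≃ₗ[F] V₂)
    (hT : T.toLinearMap ∘ₗ L = M ∘ₗ T.toLinearMap) (γ : V) :
    tau L γ = tau M (T γ) := by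
  unfold tau
  congr 1
  ext k
  simp only [Set.mem_setOf_eq]
  constructor
  · exact mem_set_map T hT k γ
  · intro h
    have h' := mem_set_map T.symm (intertwine_symm T hT) k (T γ) h
    rwa [T.symm_apply_apply] at h'

lemma tau_eq_of_sub_mem {M : V →ₗ[F] V} {β γ : V}
    (h : γ - β ∈ LinearMap.range (M - LinearMap.id : V →ₗ[F] V)) :
    tau M γ = tau M β := by
  unfold tau
  congr 1
  ext k
  simp only [Set.mem_setOf_eq]
  have hr : γ - β ∈ LinearMap.range (M - LinearMap.id : V →ₗ[F] V) ⊔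
      LinearMap.ker ((M - LinearMap.id : V →ₗ[F] V) ^ k) :=
    Submodule.mem_sup_left h
  constructor
  · intro hh
    have h2 := Submodule.sub_mem _ hh hr
    simpa using h2
  · intro hh
    have h2 := Submodule.add_mem _ hh hr
    simpa using h2

end Intertwine

section AEvalPart
open Module

variable [FiniteDimensional F V]

lemma aeval_sub_one (L : V →ₗ[F] V) (k : ℕ) :
    aeval L (((X : F[X]) - 1) ^ k) = (L - LinearMap.id : V →ₗ[F] V) ^ k := by
  rw [map_pow, map_sub, aeval_X, map_one, Module.End.one_eq_id]

lemma smul_of_eq (L : V →ₗ[F] V) (m : V) (k : ℕ) :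
    ((X : F[X]) - 1) ^ k • (AEval'.of L m)
      = AEval'.of L (((L - LinearMap.id : V →ₗ[F] V) ^ k) m) := by
  rw [← Module.AEval.of_aeval_smul, aeval_sub_one]
  rfl

lemma smul_of_eq_one (L : V →ₗ[F] V) (m : V) :
    ((X : F[X]) - 1) • (AEval'.of L m)
      = AEval'.of L ((L - LinearMap.id : V →ₗ[F] V) m) := by
  have h' := smul_of_eq L m 1
  rwa [pow_one, pow_one] at h'

lemma tset_aeval (L : V →ₗ[F] V) (γ : V) (k : ℕ) :
    γ ∈ LinearMap.range (L - LinearMap.id : V →ₗ[F] V) ⊔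
      LinearMap.ker ((L - LinearMap.id : V →ₗ[F] V) ^ k) ↔
    k ∈ TSet ((X : F[X]) - 1) (AEval'.of L γ) := by
  constructor
  · intro h
    obtain ⟨y, hy, z, hz, rfl⟩ := Submodule.mem_sup.mp h
    obtain ⟨u, rfl⟩ := hy
    refine ⟨AEval'.of L u, AEval'.of L z, ?_, ?_⟩
    · rw [map_add, smul_of_eq_one]
    · rw [smul_of_eq, LinearMap.mem_ker.mp hz, map_zero]
  · rintro ⟨u, w, h1, h2⟩
    set u₀ := (AEval'.of L).symm u with hu₀
    set w₀ := (AEval'.of L).symm w with hw₀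
    have hu : u = AEval'.of L u₀ := by rw [hu₀, LinearEquiv.apply_symm_apply]
    have hw : w = AEval'.of L w₀ := by rw [hw₀, LinearEquiv.apply_symm_apply]
    rw [hu, hw, smul_of_eq_one, ← map_add] at h1
    rw [hw, smul_of_eq] at h2
    refine Submodule.mem_sup.mpr
      ⟨(L - LinearMap.id : V →ₗ[F] V) u₀, ⟨u₀, rfl⟩, w₀, ?_, ?_⟩
    · rw [LinearMap.mem_ker]
      have h3 : AEval'.of L (((L - LinearMap.id : V →ₗ[F] V) ^ k) w₀) = AEval'.of L 0 := by
        rw [h2, map_zero]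
      exact (AEval'.of L).injective h3
    · exact ((AEval'.of L).injective h1).symm

lemma tau_eq_sInf_tset (L : V →ₗ[F] V) (γ : V) :
    tau L γ = sInf (TSet ((X : F[X]) - 1) (AEval'.of L γ)) := by
  unfold tau
  congr 1
  ext k
  simp only [Set.mem_setOf_eq]
  exact tset_aeval L γ k

end AEvalPart

section MainLCore
open Module

lemma main_L_core {K : Type u} [Field K] {W : Type u} [AddCommGroup W] [Module K W]
    [FiniteDimensional K W] (L : W →ₗ[K] W) (α β : W) (h : tau L α = tau L β) :
    ∃ T : W ≃ₗ[K] W, T.toLinearMap ∘ₗ L = L ∘ₗ T.toLinearMap ∧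
      T α - β ∈ LinearMap.range (L - LinearMap.id : W →ₗ[K] W) := by
  classical
  have hp : Prime ((X : K[X]) - 1) := by
    have h' := Polynomial.prime_X_sub_C (1 : K)
    rwa [map_one] at h'
  have htor : Module.IsTorsion K[X] (Module.AEval' L) :=
    Module.AEval.isTorsion_of_finiteDimensional K W L
  obtain ⟨ι, hfin, q, hq, e, ⟨g⟩⟩ := Module.equiv_directSum_of_isTorsion htor
  haveI := hfin
  haveI : DecidableEq ι := Classical.decEq ι
  haveI : FiniteDimensional K (⨁ i : ι, K[X] ⧸ (K[X] ∙ (q i ^ e i))) :=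
    Module.Finite.equiv (g.restrictScalars K)
  set a := g (AEval'.of L α) with ha
  set b := g (AEval'.of L β) with hb
  have hta : tau L α = sInf (TSet ((X : K[X]) - 1) a) := by
    rw [tau_eq_sInf_tset, ha, TSet.map_equiv]
  have htb : tau L β = sInf (TSet ((X : K[X]) - 1) b) := by
    rw [tau_eq_sInf_tset, hb, TSet.map_equiv]
  obtain ⟨TD, u, hTu⟩ := main_D q e hp hq a b (by rw [← hta, ← htb]; exact h)
  set TW : Module.AEval' L ≃ₗ[K[X]] Module.AEval' L := g.trans (TD.trans g.symm) with hTW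
  refine ⟨(AEval'.of L).trans ((TW.restrictScalars K).trans (AEval'.of L).symm), ?_, ?_⟩
  · refine LinearMap.ext (fun v => ?_)
    simp only [LinearMap.comp_apply, LinearEquiv.coe_coe, LinearEquiv.trans_apply,
      LinearEquiv.restrictScalars_apply]
    have h1 : AEval'.of L (L v) = (X : K[X]) • AEval'.of L v :=
      (Module.AEval'.X_smul_of L v).symm
    rw [h1, map_smul]
    exact Module.AEval.of_symm_X_smul L _
  · simp only [LinearEquiv.trans_apply, LinearEquiv.restrictScalars_apply]
    have hTWa : TW (AEval'.of L α) - AEval'.of L β = ((X : K[X]) - 1) • g.symm u := by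
      rw [hTW, LinearEquiv.trans_apply, LinearEquiv.trans_apply, ← ha]
      have h2 : AEval'.of L β = g.symm b := by rw [hb, LinearEquiv.symm_apply_apply]
      rw [h2, ← map_sub, hTu, map_smul]
    have h3 : (AEval'.of L).symm (TW (AEval'.of L α)) - β
        = (AEval'.of L).symm (TW (AEval'.of L α) - AEval'.of L β) := by
      rw [map_sub, LinearEquiv.symm_apply_apply]
    rw [h3, hTWa]
    set u₀ := (AEval'.of L).symm (g.symm u) with hu₀
    have hg : g.symm u = AEval'.of L u₀ := by rw [hu₀, LinearEquiv.apply_symm_apply]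
    rw [hg, smul_of_eq_one, LinearEquiv.symm_apply_apply]
    exact ⟨u₀, rfl⟩

end MainLCore

section MainL
open Module

lemma main_L [FiniteDimensional F V] (L : V →ₗ[F] V) (α β : V) (h : tau L α = tau L β) :
    ∃ T : V ≃ₗ[F] V, T.toLinearMap ∘ₗ L = L ∘ₗ T.toLinearMap ∧
      T α - β ∈ LinearMap.range (L - LinearMap.id : V →ₗ[F] V) := by
  classical
  set E : V ≃ₗ[F] (Fin (Module.finrank F V) → F) :=
    (Module.finBasis F V).equivFun with hE
  set L' : (Fin (Module.finrank F V) → F) →ₗ[F] (Fin (Module.finrank F V) → F) :=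
    (E.toLinearMap ∘ₗ L) ∘ₗ E.symm.toLinearMap with hL'
  have hEL : E.toLinearMap ∘ₗ L = L' ∘ₗ E.toLinearMap := by
    refine LinearMap.ext (fun v => ?_)
    simp [hL']
  have hEL' : ∀ v, E (L v) = L' (E v) := fun v => congrArg (fun f => f v) hEL
  have hτα : tau L α = tau L' (E α) := tau_eq_of_intertwine E hEL α
  have hτβ : tau L β = tau L' (E β) := tau_eq_of_intertwine E hEL β
  obtain ⟨T', hT'c, hT'm⟩ := main_L_core L' (E α) (E β) (by rw [← hτα, ← hτβ]; exact h)
  have hT' : ∀ v, T' (L' v) = L' (T' v) := fun v => congrArg (fun f => f v) hT'c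
  refine ⟨E.trans (T'.trans E.symm), ?_, ?_⟩
  · refine LinearMap.ext (fun v => ?_)
    simp only [LinearMap.comp_apply, LinearEquiv.coe_coe, LinearEquiv.trans_apply]
    apply E.injective
    rw [E.apply_symm_apply, hEL' v, hT' (E v), hEL' (E.symm (T' (E v))), E.apply_symm_apply]
  · obtain ⟨w, hw⟩ := hT'm
    have h4 : (E.trans (T'.trans E.symm)) α - β = E.symm (T' (E α) - E β) := by
      simp only [LinearEquiv.trans_apply, map_sub, E.symm_apply_apply]
    rw [h4, ← hw]
    refine ⟨E.symm w, ?_⟩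
    have h5 : ∀ v, E.symm ((L' - LinearMap.id : (Fin (Module.finrank F V) → F) →ₗ[F]
        (Fin (Module.finrank F V) → F)) v) = (L - LinearMap.id : V →ₗ[F] V) (E.symm v) := by
      intro v
      have h7 : E.symm (L' v) = L (E.symm v) := by
        apply E.injective
        rw [E.apply_symm_apply, hEL' (E.symm v), E.apply_symm_apply]
      simp only [LinearMap.sub_apply, LinearMap.id_apply, map_sub, h7]
    exact (h5 w).symm

end MainL

/-- If `L` and `M` are similar linear maps on a finite-dimensional
space `V`, then for all `α β : V` there is a module isomorphism `T` intertwining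
`L` and `M` and taking the coset `α + range (L - id)` to `β + range (M - id)`,
if and only if `τ(α, L) = τ(β, M)`. -/
theorem exists_intertwiner_coset_iff_tau_eq
    [FiniteDimensional F V] (L M : V →ₗ[F] V)
    (hsim : ∃ S : V ≃ₗ[F] V, S.toLinearMap ∘ₗ L = M ∘ₗ S.toLinearMap)
    (α β : V) :
    (∃ T : V ≃ₗ[F] V, T.toLinearMap ∘ₗ L = M ∘ₗ T.toLinearMap ∧
        T α - β ∈ LinearMap.range (M - LinearMap.id : V →ₗ[F] V)) ↔
      tau L α = tau M β := by

  obtain ⟨S, hS⟩ := hsim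
  constructor
  · rintro ⟨T, hT, hmem⟩
    rw [tau_eq_of_intertwine T hT α]
    exact tau_eq_of_sub_mem hmem
  · intro htau
    set β' := S.symm β with hβ'
    have hτβ' : tau L β' = tau M β := by
      have h' := tau_eq_of_intertwine S hS β'
      rwa [hβ', S.apply_symm_apply] at h'
    obtain ⟨T₀, hT₀c, hT₀m⟩ := main_L L α β' (htau.trans hτβ'.symm)
    have hT₀ : ∀ v, T₀ (L v) = L (T₀ v) := fun v => congrArg (fun f => f v) hT₀c
    have hSL : ∀ v, S (L v) = M (S v) := fun v => congrArg (fun f => f v) hS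
    refine ⟨T₀.trans S, ?_, ?_⟩
    · refine LinearMap.ext (fun v => ?_)
      simp only [LinearMap.comp_apply, LinearEquiv.coe_coe, LinearEquiv.trans_apply]
      rw [hT₀ v, hSL (T₀ v)]
    · obtain ⟨w, hw⟩ := hT₀m
      have h6 : (T₀.trans S) α - β = S (T₀ α - β') := by
        rw [map_sub, hβ', S.apply_symm_apply]
        rfl
      rw [h6, ← hw]
      refine ⟨S w, ?_⟩
      simp only [LinearMap.sub_apply, LinearMap.id_apply, map_sub, hSL w]
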